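/- Suppose there exists a ring isomorphism F : R ×_ω M → R ×_{ω'} M' restricting to the identity on R × {0} and mapping {0} × M onto {0} × M'. Then the induced map φ : M → M' is an R-module isomorphism satisfying ω'(φ(x), φ(y)) = ω(x, y) for all x, y ∈ M. Conversely, any R-module isomorphism φ : M → M' with ω'(φ(x), φ(y)) = ω(x, y) induces such a ring isomorphism via (a, x) ↦ (a, φ(x)). -/

import Mathlib

/-- The multiplication `(a, x) · (b, y) = (a b + ω(x, y), a • y + b • x)` on `R × M`. -/
def superMul {R M : Type*} [CommRing R] [AddCommGroup M] [Module R M]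
    (ω : M →ₗ[R] M →ₗ[R] R) (p q : R × M) : R × M :=
  (p.1 * q.1 + ω p.2 q.2, p.1 • q.2 + q.1 • p.2)

theorem stmt12 {R M M' : Type*} [CommRing R]
    [AddCommGroup M] [Module R M] [AddCommGroup M'] [Module R M']
    (ω : M →ₗ[R] M →ₗ[R] R) (ω' : M' →ₗ[R] M' →ₗ[R] R)
    (hω : ∀ x y z : M, ω x y • z = ω y z • x)
    (hω' : ∀ x y z : M', ω' x y • z = ω' y z • x) :
    (∀ F : R × M → R × M',
      Function.Bijective F →
      (∀ p q : R × M, F (p + q) = F p + F q) →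
      (∀ p q : R × M, F (superMul ω p q) = superMul ω' (F p) (F q)) →
      (∀ a : R, F (a, 0) = (a, 0)) →
      (∀ x : M, (F (0, x)).1 = 0) →
      (∀ y : M', ∃ x : M, F (0, x) = (0, y)) →
      ∃ φ : M ≃ₗ[R] M',
        (∀ x : M, F (0, x) = (0, φ x)) ∧
        (∀ x y : M, ω' (φ x) (φ y) = ω x y)) ∧
    (∀ φ : M ≃ₗ[R] M', (∀ x y : M, ω' (φ x) (φ y) = ω x y) →
      let F : R × M → R × M' := fun p => (p.1, φ p.2)
      Function.Bijective F ∧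
      (∀ p q : R × M, F (p + q) = F p + F q) ∧
      (∀ p q : R × M, F (superMul ω p q) = superMul ω' (F p) (F q)) ∧
      F (1, 0) = (1, 0) ∧
      (∀ a : R, F (a, 0) = (a, 0)) ∧
      (∀ y : M', ∃ x : M, F (0, x) = (0, y))) := by
  constructor
  · intro F hbij hadd hmul hid hfst hsurj
    have hFx : ∀ x : M, F (0, x) = (0, (F (0, x)).2) := by
      intro x
      ext
      · exact hfst x
      · rfl
    -- the underlying linear map
    have hsmul : ∀ (a : R) (x : M), (F (0, a • x)).2 = a • (F (0, x)).2 := by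
      intro a x
      have h1 : superMul ω (a, 0) (0, x) = (0, a • x) := by
        simp [superMul]
      have h2 : superMul ω' (a, (0 : M')) (0, (F (0, x)).2) = (0, a • (F (0, x)).2) := by
        simp [superMul]
      have := hmul (a, 0) (0, x)
      rw [h1, hid a, hFx x, h2] at this
      exact congrArg Prod.snd this
    have hadd' : ∀ x y : M, (F (0, x + y)).2 = (F (0, x)).2 + (F (0, y)).2 := by
      intro x y
      have : F ((0, x) + (0, y)) = F (0, x) + F (0, y) := hadd _ _
      have h : F (0, x + y) = F (0, x) + F (0, y) := by
        simpa using this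
      rw [h]; rfl
    let ψ : M →ₗ[R] M' :=
      { toFun := fun x => (F (0, x)).2
        map_add' := hadd'
        map_smul' := fun a x => hsmul a x }
    have hψinj : Function.Injective ψ := by
      intro x y hxy
      have : F (0, x) = F (0, y) := by
        rw [hFx x, hFx y]
        exact congrArg (Prod.mk 0) hxy
      have := hbij.1 this
      exact congrArg Prod.snd this
    have hψsurj : Function.Surjective ψ := by
      intro y
      obtain ⟨x, hx⟩ := hsurj y
      exact ⟨x, by simp [ψ, hx]⟩
    refine ⟨LinearEquiv.ofBijective ψ ⟨hψinj, hψsurj⟩, fun x => hFx x, ?_⟩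
    intro x y
    have h1 : superMul ω (0, x) (0, y) = (ω x y, 0) := by
      simp [superMul]
    have h2 : superMul ω' ((0 : R), ψ x) (0, ψ y) = (ω' (ψ x) (ψ y), 0) := by
      simp [superMul]
    have := hmul (0, x) (0, y)
    rw [h1, hid (ω x y), hFx x, hFx y] at this
    have h3 := congrArg Prod.fst this
    simp only [superMul, zero_mul, zero_add, map_zero, LinearMap.zero_apply, add_zero] at h3
    show ω' (ψ x) (ψ y) = ω x y
    exact (by simpa using h3.symm : ω' (F (0, x)).2 (F (0, y)).2 = ω x y)
  · intro φ hφ F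
    refine ⟨⟨?_, ?_⟩, ?_, ?_, ?_, ?_, ?_⟩
    · intro p q h
      simp only [F, Prod.mk.injEq] at h
      exact Prod.ext h.1 (φ.injective h.2)
    · intro q
      exact ⟨(q.1, φ.symm q.2), by simp [F]⟩
    · intro p q; simp [F]
    · intro p q; simp [F, superMul, hφ]
    · simp [F]
    · intro a; simp [F]
    · intro y; exact ⟨φ.symm y, by simp [F]⟩
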